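/- Let c^{(1)},...,c^{(m)} be m infinite sequences of commuting formal variables c_r^{(i)} (r ∈ ℤ). If the two-entry Pfaffian satisfies Pf[c_r^{(l)} c_r^{(l)}] = 0 (for a specific fixed pair of superscript positions with equal entries), then for any r_1,...,r_m, Pf[c_{r_1}^{(l_1)} ⋯ c_r^{(l)} c_r^{(l)} ⋯ c_{r_m}^{(l_m)}] = 0, where the multi Schur-Pfaffian is defined recursively: Pf[c_r^{(1)}] = c_r^{(1)}; Pf[c_{r_1}^{(1)} c_{r_2}^{(2)}] = c_{r_1}^{(1)}c_{r_2}^{(2)} + 2∑_{s=1}^{r_2}(−1)^s c_{r_1+s}^{(1)}c_{r_2−s}^{(2)}; for even m ≥ 4, Pf[c_{r_1}^{(1)}⋯c_{r_m}^{(m)}] = ∑_{s=2}^m (−1)^s Pf[c_{r_1}^{(1)}c_{r_s}^{(s)}]·Pf[c_{r_2}^{(2)}⋯ĉ_{r_s}^{(s)}⋯c_{r_m}^{(m)}]; for odd m ≥ 3, Pf[c_{r_1}^{(1)}⋯c_{r_m}^{(m)}] = ∑_{s=1}^m (−1)^{s−1} c_{r_s}^{(s)}·Pf[c_{r_1}^{(1)}⋯ĉ_{r_s}^{(s)}⋯c_{r_m}^{(m)}].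 -/
import Mathlib


/-!
Statement 7 (Proposition 4.1(1) of Ikeda–Matsumura, after Kazarian): if the two-entry multi
Schur-Pfaffian of a repeated entry vanishes, `Pf[c_r^{(l)} c_r^{(l)}] = 0`, then every multi
Schur-Pfaffian containing this repeated pair of entries in adjacent positions vanishes:
`Pf[c_{r_1}^{(1)} ⋯ c_r^{(l)} c_r^{(l)} ⋯ c_{r_m}^{(m)}] = 0`.

An entry of a multi Schur-Pfaffian is a pair consisting of an infinite sequence
`c^{(i)} = (c_s^{(i)})_{s ∈ ℤ}` of (commuting) quantities and a degree `r_i ∈ ℤ`; the Pfaffian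
is the ℤ-linear combination of products determined by the recursion of Section 4 of the paper
(`Pf[c_r] = c_r`; `Pf[c_{r₁} c_{r₂}] = c_{r₁}c_{r₂} + 2∑_{s=1}^{r₂}(−1)^s c_{r₁+s}c_{r₂−s}`;
expansion along the first entry for even length `≥ 4` and along each entry for odd length
`≥ 3`).  Since the claim is an implication between polynomial identities, we state it for
arbitrary sequences of elements of an arbitrary commutative ring, which includes the generic
(polynomial-ring) case. -/

open Finset

noncomputable section

variable {R : Type*} [CommRing R]

/-- The two-entry multi Schur-Pfaffian
`Pf[c_r d_s] = c_r d_s + 2 ∑_{j=1}^{s} (−1)^j c_{r+j} d_{s−j}` (the sum being empty if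
`s < 0`). -/
def pf2 (c d : ℤ → R) (r s : ℤ) : R :=
  c r * d s + 2 * ∑ j ∈ range s.toNat, (-1 : R) ^ (j + 1) * c (r + (j + 1)) * d (s - (j + 1))

/-- Auxiliary fuel-based definition of the multi Schur-Pfaffian of a list of entries
(sequence, degree). -/
def pfAux : ℕ → List ((ℤ → R) × ℤ) → R
  | _, [] => 1
  | _, [e] => e.1 e.2
  | _, [e, f] => pf2 e.1 f.1 e.2 f.2
  | 0, _ => 0
  | n + 1, e :: l =>
    if (l.length + 1) % 2 = 0 then
      -- even length: expand along the first entry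
      ∑ j : Fin l.length,
        (-1 : R) ^ (j : ℕ) * pf2 e.1 (l.get j).1 e.2 (l.get j).2 * pfAux n (l.eraseIdx j)
    else
      -- odd length: expand removing one entry at a time
      ∑ j : Fin (l.length + 1),
        (-1 : R) ^ (j : ℕ) * ((e :: l).get j).1 ((e :: l).get j).2
          * pfAux n ((e :: l).eraseIdx j)

/-- The multi Schur-Pfaffian `Pf[c_{r_1}^{(1)} ⋯ c_{r_m}^{(m)}]` of a list of `m` entries. -/
def pfaffian (L : List ((ℤ → R) × ℤ)) : R := pfAux L.length L

lemma pfAux_cons (n : ℕ) (e f g : (ℤ → R) × ℤ) (l : List ((ℤ → R) × ℤ)) :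
    pfAux (n+1) (e :: f :: g :: l) =
    if ((f::g::l).length + 1) % 2 = 0 then
      ∑ j : Fin (f::g::l).length,
        (-1:R)^(j:ℕ) * pf2 e.1 ((f::g::l).get j).1 e.2 ((f::g::l).get j).2
          * pfAux n ((f::g::l).eraseIdx j)
    else
      ∑ j : Fin ((f::g::l).length+1),
        (-1:R)^(j:ℕ) * ((e::f::g::l).get j).1 ((e::f::g::l).get j).2
          * pfAux n ((e::f::g::l).eraseIdx j) := rfl

lemma pfAux_fuel : ∀ (n m : ℕ) (L : List ((ℤ → R) × ℤ)), L.length ≤ n → L.length ≤ m →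
    pfAux n L = pfAux m L := by
  intro n
  induction n with
  | zero =>
    intro m L h1 _
    have : L = [] := List.length_eq_zero_iff.mp (Nat.le_zero.mp h1)
    subst this
    cases m <;> rfl
  | succ n ih =>
    intro m L h1 h2
    match L with
    | [] => cases m <;> rfl
    | [e] => cases m <;> rfl
    | [e, f] => cases m <;> rfl
    | e :: f :: g :: l =>
      simp only [List.length_cons] at h1 h2
      obtain ⟨m', rfl⟩ : ∃ m', m = m' + 1 := ⟨m - 1, by omega⟩
      rw [pfAux_cons, pfAux_cons]
      congr 1
      · apply Finset.sum_congr rfl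
        intro j _
        have hj := j.isLt
        simp only [List.length_cons] at hj
        congr 1
        rw [ih n, ih m'] <;>
          simp only [List.length_eraseIdx, List.length_cons] <;> split <;> omega
      · apply Finset.sum_congr rfl
        intro j _
        have hj := j.isLt
        simp only [List.length_cons] at hj
        congr 1
        rw [ih n, ih m'] <;>
          simp only [List.length_eraseIdx, List.length_cons] <;> split <;> omega

lemma pfAux_eq_pfaffian (n : ℕ) (L : List ((ℤ → R) × ℤ)) (h : L.length ≤ n) :
    pfAux n L = pfaffian L := pfAux_fuel n L.length L h le_rfl

lemma pfaffian_cons_even (e : (ℤ → R) × ℤ) (l : List ((ℤ → R) × ℤ)) (h1 : l ≠ [])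
    (h2 : (l.length + 1) % 2 = 0) :
    pfaffian (e :: l) =
      ∑ j : Fin l.length,
        (-1:R)^(j:ℕ) * pf2 e.1 (l.get j).1 e.2 (l.get j).2 * pfaffian (l.eraseIdx (j:ℕ)) := by
  match l with
  | [] => exact absurd rfl h1
  | [f] =>
    show pf2 e.1 f.1 e.2 f.2 = ∑ j : Fin 1, _
    rw [Fin.sum_univ_one]
    show pf2 e.1 f.1 e.2 f.2 = (-1:R)^(0:ℕ) * pf2 e.1 f.1 e.2 f.2 * pfaffian []
    show pf2 e.1 f.1 e.2 f.2 = (-1:R)^(0:ℕ) * pf2 e.1 f.1 e.2 f.2 * 1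
    ring
  | f :: g :: l' =>
    show pfAux (l'.length + 2 + 1) _ = _
    rw [pfAux_cons, if_pos h2]
    apply Finset.sum_congr rfl
    intro j _
    congr 1
    apply pfAux_eq_pfaffian
    have := j.isLt
    simp only [List.length_eraseIdx, List.length_cons] at *
    split <;> omega

lemma pfaffian_cons_odd (e : (ℤ → R) × ℤ) (l : List ((ℤ → R) × ℤ))
    (h2 : (l.length + 1) % 2 = 1) :
    pfaffian (e :: l) =
      ∑ j : Fin (l.length + 1),
        (-1:R)^(j:ℕ) * ((e::l).get j).1 ((e::l).get j).2 * pfaffian ((e::l).eraseIdx (j:ℕ)) := by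
  match l with
  | [] =>
    show e.1 e.2 = ∑ j : Fin 1, _
    rw [Fin.sum_univ_one]
    show e.1 e.2 = (-1:R)^(0:ℕ) * (e.1 e.2) * pfaffian []
    show e.1 e.2 = (-1:R)^(0:ℕ) * (e.1 e.2) * 1
    ring
  | [f] => simp at h2
  | f :: g :: l' =>
    show pfAux (l'.length + 2 + 1) _ = _
    rw [pfAux_cons, if_neg (by omega)]
    apply Finset.sum_congr rfl
    intro j _
    congr 1
    apply pfAux_eq_pfaffian
    have := j.isLt
    simp only [List.length_eraseIdx, List.length_cons] at *
    split <;> omega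

/-- dummy default entry -/
def pfD : (ℤ → R) × ℤ := (fun _ => 0, 0)

lemma pfaffian_even_range (e : (ℤ → R) × ℤ) (l : List ((ℤ → R) × ℤ)) (h1 : l ≠ [])
    (h2 : (l.length + 1) % 2 = 0) :
    pfaffian (e :: l) =
      ∑ j ∈ range l.length,
        (-1:R)^j * pf2 e.1 (l.getD j pfD).1 e.2 (l.getD j pfD).2 * pfaffian (l.eraseIdx j) := by
  rw [pfaffian_cons_even e l h1 h2, ← Fin.sum_univ_eq_sum_range]
  apply Finset.sum_congr rfl
  intro j _
  rw [List.get_eq_getElem, List.getD_eq_getElem _ _ j.isLt]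

lemma pfaffian_odd_range (L : List ((ℤ → R) × ℤ)) (h1 : L ≠ [])
    (h2 : L.length % 2 = 1) :
    pfaffian L =
      ∑ j ∈ range L.length,
        (-1:R)^j * (L.getD j pfD).1 (L.getD j pfD).2 * pfaffian (L.eraseIdx j) := by
  match L with
  | [] => exact absurd rfl h1
  | e :: l =>
    rw [pfaffian_cons_odd e l (by simpa using h2), ← Fin.sum_univ_eq_sum_range]
    apply Finset.sum_congr rfl
    intro j _
    rw [List.get_eq_getElem, List.getD_eq_getElem (e :: l) _ (by exact j.isLt)]

lemma eraseIdx_eraseIdx_comm {α : Type*} (M : List α) (a b : ℕ) (hab : a < b)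
    (hb : b < M.length) :
    (M.eraseIdx b).eraseIdx a = (M.eraseIdx a).eraseIdx (b - 1) := by
  have ha : a < M.length := lt_trans hab hb
  have len1 : ((M.eraseIdx b).eraseIdx a).length = M.length - 2 := by
    rw [List.length_eraseIdx, List.length_eraseIdx]
    split_ifs <;> omega
  have len2 : ((M.eraseIdx a).eraseIdx (b - 1)).length = M.length - 2 := by
    rw [List.length_eraseIdx, List.length_eraseIdx]
    split_ifs <;> omega
  apply List.ext_getElem (by omega)
  intro j h1 h2
  rw [len1] at h1
  rcases Nat.lt_or_ge j a with hja | hja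
  · simp only [List.getElem_eraseIdx, dif_pos hja, dif_pos (show j < b by omega),
      dif_pos (show j < b - 1 by omega)]
  · rcases Nat.lt_or_ge j (b-1) with hjb | hjb
    · simp only [List.getElem_eraseIdx, dif_neg (show ¬ j < a by omega),
        dif_pos (show j + 1 < b by omega), dif_pos hjb]
    · simp only [List.getElem_eraseIdx, dif_neg (show ¬ j < a by omega),
        dif_neg (show ¬ j + 1 < b by omega), dif_neg (show ¬ j < b - 1 by omega),
        dif_neg (show ¬ j + 1 < a by omega)]

lemma eraseIdx_adjacent_eq {α : Type*} (M : List α) (k : ℕ) (hk : k + 1 < M.length)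
    (h : M[k] = M[k+1]) : M.eraseIdx k = M.eraseIdx (k + 1) := by
  have len1 : (M.eraseIdx k).length = M.length - 1 := by
    rw [List.length_eraseIdx]; split_ifs <;> omega
  have len2 : (M.eraseIdx (k+1)).length = M.length - 1 := by
    rw [List.length_eraseIdx]; split_ifs <;> omega
  apply List.ext_getElem (by omega)
  intro j h1 h2
  rw [len1] at h1
  rcases Nat.lt_or_ge j k with hjk | hjk
  · simp only [List.getElem_eraseIdx, dif_pos hjk, dif_pos (show j < k + 1 by omega)]
  · rcases Nat.eq_or_lt_of_le hjk with hjk2 | hjk2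
    · subst hjk2
      simp only [List.getElem_eraseIdx, dif_neg (show ¬ k < k by omega),
        dif_pos (show k < k + 1 by omega)]
      exact h.symm
    · simp only [List.getElem_eraseIdx, dif_neg (show ¬ j < k by omega),
        dif_neg (show ¬ j < k + 1 by omega)]

lemma getD_eraseIdx_lt {α : Type*} (M : List α) (i k : ℕ) (d : α) (hki : k < i)
    (hk : k < (M.eraseIdx i).length) :
    (M.eraseIdx i).getD k d = M.getD k d := by
  have hkM : k < M.length := lt_of_lt_of_le hk (by rw [List.length_eraseIdx]; split <;> omega)
  rw [List.getD_eq_getElem _ _ hk, List.getD_eq_getElem _ _ hkM, List.getElem_eraseIdx,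
    dif_pos hki]

lemma getD_eraseIdx_ge {α : Type*} (M : List α) (i k : ℕ) (d : α) (hki : i ≤ k)
    (hi : i < M.length) (hk : k < (M.eraseIdx i).length) :
    (M.eraseIdx i).getD k d = M.getD (k+1) d := by
  have hkM : k + 1 < M.length := by
    rw [List.length_eraseIdx, if_pos hi] at hk; omega
  rw [List.getD_eq_getElem _ _ hk, List.getD_eq_getElem _ _ hkM, List.getElem_eraseIdx,
    dif_neg (by omega)]

lemma length_eraseIdx_of_lt {α : Type*} (M : List α) (i : ℕ) (h : i < M.length) :
    (M.eraseIdx i).length = M.length - 1 := by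
  rw [List.length_eraseIdx, if_pos h]

/-- Proposition 4.1(1): if `Pf[c_r c_r] = 0` then any multi Schur-Pfaffian with the repeated
adjacent pair of entries `(c, r), (c, r)` vanishes. -/
theorem pfaffian_repeated_entry_eq_zero (c : ℤ → R) (r : ℤ)
    (h : pfaffian [(c, r), (c, r)] = 0) :
    ∀ L₁ L₂ : List ((ℤ → R) × ℤ), pfaffian (L₁ ++ (c, r) :: (c, r) :: L₂) = 0 := by
  have hpf2 : pf2 c c r r = 0 := h
  suffices H : ∀ n (L₁ L₂ : List ((ℤ → R) × ℤ)), (L₁ ++ (c,r) :: (c,r) :: L₂).length ≤ n →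
      pfaffian (L₁ ++ (c,r) :: (c,r) :: L₂) = 0 by
    exact fun L₁ L₂ => H _ L₁ L₂ le_rfl
  intro n
  induction n with
  | zero => intro L₁ L₂ hlen; simp at hlen
  | succ n ih =>
    intro L₁ L₂ hlen
    have hlenL : (L₁ ++ (c,r) :: (c,r) :: L₂).length = L₁.length + L₂.length + 2 := by
      simp only [List.length_append, List.length_cons]; omega
    rcases Nat.even_or_odd (L₁.length + L₂.length + 2) with heven | hodd
    · -- even total length
      rcases L₁ with _ | ⟨e, L₁'⟩
      · -- hard case: the pair is at the front
        rw [List.nil_append]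
        by_cases hL2 : L₂ = []
        · subst hL2; exact h
        · have hm : 2 ≤ L₂.length := by
            have h1 : L₂.length ≠ 0 := fun hc => hL2 (List.length_eq_zero_iff.mp hc)
            have h2 := Nat.even_iff.mp heven
            simp only [List.length_nil] at h2
            omega
          have hmE : L₂.length % 2 = 0 := by
            have h2 := Nat.even_iff.mp heven
            simp only [List.length_nil] at h2
            omega
          have hpar : (((c,r) :: L₂).length + 1) % 2 = 0 := by
            simp only [List.length_cons]; omega
          rw [pfaffian_even_range (c,r) ((c,r) :: L₂) (by simp) hpar]
          simp only [List.length_cons]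
          rw [Finset.sum_range_succ']
          simp only [List.getD_cons_zero, List.getD_cons_succ, List.eraseIdx_cons_zero,
            List.eraseIdx_cons_succ, pow_zero, one_mul, hpf2, zero_mul, mul_zero, add_zero]
          have step : ∀ i ∈ range L₂.length,
              (-1:R)^(i+1) * pf2 c (L₂.getD i pfD).1 r (L₂.getD i pfD).2 *
                pfaffian ((c,r) :: L₂.eraseIdx i)
              = ∑ k ∈ range (L₂.length - 1),
                  ((-1:R)^(i+1) * pf2 c (L₂.getD i pfD).1 r (L₂.getD i pfD).2) *
                  ((-1:R)^k * pf2 c ((L₂.eraseIdx i).getD k pfD).1 r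
                      ((L₂.eraseIdx i).getD k pfD).2 *
                    pfaffian ((L₂.eraseIdx i).eraseIdx k)) := by
            intro i hi
            rw [Finset.mem_range] at hi
            rw [pfaffian_even_range (c,r) (L₂.eraseIdx i)
                (by rw [← List.length_pos_iff, length_eraseIdx_of_lt _ _ hi]; omega)
                (by rw [length_eraseIdx_of_lt _ _ hi]; omega),
              length_eraseIdx_of_lt _ _ hi, Finset.mul_sum]
          rw [Finset.sum_congr rfl step, ← Finset.sum_product']
          refine Finset.sum_involution
            (fun x _ => if x.2 < x.1 then (x.2, x.1 - 1) else (x.2 + 1, x.1)) ?_ ?_ ?_ ?_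
          · rintro ⟨i, k⟩ hx
            simp only [Finset.mem_product, Finset.mem_range] at hx
            obtain ⟨hi, hk⟩ := hx
            dsimp only
            split_ifs with hc
            · have e1 : (L₂.eraseIdx i).getD k pfD = L₂.getD k pfD :=
                getD_eraseIdx_lt _ _ _ _ hc (by rw [length_eraseIdx_of_lt _ _ hi]; omega)
              have e2 : (L₂.eraseIdx k).getD (i-1) pfD = L₂.getD i pfD := by
                rw [getD_eraseIdx_ge _ _ _ _ (by omega) (by omega)
                  (by rw [length_eraseIdx_of_lt _ _ (by omega)]; omega)]
                congr 1
                omega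
              have e3 : (L₂.eraseIdx i).eraseIdx k = (L₂.eraseIdx k).eraseIdx (i-1) :=
                eraseIdx_eraseIdx_comm L₂ k i hc hi
              rw [e1, e2, e3]
              have hi1 : i + 1 = (i - 1) + 2 := by omega
              rw [hi1]
              ring
            · have hc' : i ≤ k := by omega
              have e1 : (L₂.eraseIdx i).getD k pfD = L₂.getD (k+1) pfD :=
                getD_eraseIdx_ge _ _ _ _ hc' (by omega)
                  (by rw [length_eraseIdx_of_lt _ _ hi]; omega)
              have e2 : (L₂.eraseIdx (k+1)).getD i pfD = L₂.getD i pfD :=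
                getD_eraseIdx_lt _ _ _ _ (by omega)
                  (by rw [length_eraseIdx_of_lt _ _ (by omega)]; omega)
              have e3 : (L₂.eraseIdx (k+1)).eraseIdx i = (L₂.eraseIdx i).eraseIdx k := by
                rw [eraseIdx_eraseIdx_comm L₂ i (k+1) (by omega) (by omega)]
                simp
              rw [e1, e2, e3]
              ring
          · rintro ⟨i, k⟩ hx hne
            dsimp only
            split_ifs with hc <;> · intro heq; rw [Prod.mk.injEq] at heq; omega
          · rintro ⟨i, k⟩ hx
            simp only [Finset.mem_product, Finset.mem_range] at hx
            dsimp only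
            split_ifs with hc <;>
              simp only [Finset.mem_product, Finset.mem_range] <;> constructor <;> omega
          · rintro ⟨i, k⟩ hx
            simp only [Finset.mem_product, Finset.mem_range] at hx
            dsimp only
            split_ifs <;> rw [Prod.mk.injEq] <;> constructor <;> omega
      · -- even, nonempty L₁ : expand along the first entry e
        rw [List.cons_append]
        have hpar : ((L₁' ++ (c,r) :: (c,r) :: L₂).length + 1) % 2 = 0 := by
          have := Nat.even_iff.mp heven
          simp only [List.length_append, List.length_cons] at *
          omega
        rw [pfaffian_even_range e _ (by simp) hpar]
        have hlenl : (L₁' ++ (c,r) :: (c,r) :: L₂).length = L₁'.length + L₂.length + 2 := by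
          simp only [List.length_append, List.length_cons]; omega
        set t := L₁'.length with ht
        have hsub : ({t, t+1} : Finset ℕ) ⊆ range (L₁' ++ (c,r) :: (c,r) :: L₂).length := by
          intro x hx
          simp only [Finset.mem_insert, Finset.mem_singleton] at hx
          rw [Finset.mem_range, hlenl]
          omega
        refine ((Finset.sum_subset hsub ?_).symm).trans ?_
        · intro j hj hj2
          rw [Finset.mem_range, hlenl] at hj
          simp only [Finset.mem_insert, Finset.mem_singleton] at hj2
          push_neg at hj2
          obtain ⟨hj2a, hj2b⟩ := hj2
          rcases Nat.lt_or_ge j t with hjt | hjt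
          · rw [List.eraseIdx_append_of_lt_length (by omega)]
            rw [ih (L₁'.eraseIdx j) L₂ ?_, mul_zero]
            have := length_eraseIdx_of_lt L₁' j (by omega)
            simp only [List.length_append, List.length_cons] at *
            omega
          · have hjt2 : t + 2 ≤ j := by omega
            rw [List.eraseIdx_append_of_length_le (by omega)]
            obtain ⟨dd, hdd⟩ : ∃ dd, j - L₁'.length = dd + 2 := ⟨j - t - 2, by omega⟩
            rw [hdd, List.eraseIdx_cons_succ, List.eraseIdx_cons_succ]
            rw [ih L₁' (L₂.eraseIdx dd) ?_, mul_zero]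
            have := length_eraseIdx_of_lt L₂ dd (by omega)
            simp only [List.length_append, List.length_cons] at *
            omega
        · rw [Finset.sum_pair (show t ≠ t + 1 by omega)]
          have hget_t : (L₁' ++ (c,r) :: (c,r) :: L₂).getD t pfD = (c,r) := by
            rw [List.getD_eq_getElem _ _ (by rw [hlenl]; omega),
              List.getElem_append_right le_rfl]
            simp
          have hget_t1 : (L₁' ++ (c,r) :: (c,r) :: L₂).getD (t+1) pfD = (c,r) := by
            rw [List.getD_eq_getElem _ _ (by rw [hlenl]; omega),
              List.getElem_append_right (by omega)]
            have h1 : t + 1 - L₁'.length = 1 := by omega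
            simp [h1]
          have her0 : (L₁' ++ (c,r) :: (c,r) :: L₂).eraseIdx t = L₁' ++ (c,r) :: L₂ := by
            rw [List.eraseIdx_append_of_length_le le_rfl, Nat.sub_self]
            rfl
          have her1 : (L₁' ++ (c,r) :: (c,r) :: L₂).eraseIdx (t+1) = L₁' ++ (c,r) :: L₂ := by
            rw [List.eraseIdx_append_of_length_le (by omega)]
            have h1 : t + 1 - L₁'.length = 1 := by omega
            rw [h1]
            rfl
          rw [hget_t, hget_t1, her0, her1, pow_succ]
          ring
    · -- odd total length
      have hodd' : (L₁ ++ (c,r) :: (c,r) :: L₂).length % 2 = 1 := by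
        rw [hlenL]; exact Nat.odd_iff.mp hodd
      rw [pfaffian_odd_range _ (by simp) hodd']
      set t := L₁.length with ht
      have hsub : ({t, t+1} : Finset ℕ) ⊆ range (L₁ ++ (c,r) :: (c,r) :: L₂).length := by
        intro x hx
        simp only [Finset.mem_insert, Finset.mem_singleton] at hx
        rw [Finset.mem_range, hlenL]
        omega
      refine ((Finset.sum_subset hsub ?_).symm).trans ?_
      · intro j hj hj2
        rw [Finset.mem_range, hlenL] at hj
        simp only [Finset.mem_insert, Finset.mem_singleton] at hj2
        push_neg at hj2
        obtain ⟨hj2a, hj2b⟩ := hj2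
        rcases Nat.lt_or_ge j t with hjt | hjt
        · rw [List.eraseIdx_append_of_lt_length (by omega)]
          rw [ih (L₁.eraseIdx j) L₂ ?_, mul_zero]
          have := length_eraseIdx_of_lt L₁ j (by omega)
          simp only [List.length_append, List.length_cons] at *
          omega
        · have hjt2 : t + 2 ≤ j := by omega
          rw [List.eraseIdx_append_of_length_le (by omega)]
          obtain ⟨dd, hdd⟩ : ∃ dd, j - L₁.length = dd + 2 := ⟨j - t - 2, by omega⟩
          rw [hdd, List.eraseIdx_cons_succ, List.eraseIdx_cons_succ]
          rw [ih L₁ (L₂.eraseIdx dd) ?_, mul_zero]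
          have := length_eraseIdx_of_lt L₂ dd (by omega)
          simp only [List.length_append, List.length_cons] at *
          omega
      · rw [Finset.sum_pair (show t ≠ t + 1 by omega)]
        have hget_t : (L₁ ++ (c,r) :: (c,r) :: L₂).getD t pfD = (c,r) := by
          rw [List.getD_eq_getElem _ _ (by rw [hlenL]; omega),
            List.getElem_append_right le_rfl]
          simp
        have hget_t1 : (L₁ ++ (c,r) :: (c,r) :: L₂).getD (t+1) pfD = (c,r) := by
          rw [List.getD_eq_getElem _ _ (by rw [hlenL]; omega),
            List.getElem_append_right (by omega)]
          have h1 : t + 1 - L₁.length = 1 := by omega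
          simp [h1]
        have her0 : (L₁ ++ (c,r) :: (c,r) :: L₂).eraseIdx t = L₁ ++ (c,r) :: L₂ := by
          rw [List.eraseIdx_append_of_length_le le_rfl, Nat.sub_self]
          rfl
        have her1 : (L₁ ++ (c,r) :: (c,r) :: L₂).eraseIdx (t+1) = L₁ ++ (c,r) :: L₂ := by
          rw [List.eraseIdx_append_of_length_le (by omega)]
          have h1 : t + 1 - L₁.length = 1 := by omega
          rw [h1]
          rfl
        rw [hget_t, hget_t1, her0, her1, pow_succ]
        ring

end
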